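/- Fix integers D ≥ 1 and r ≥ 3, and let C = 𝔸_D⁻¹𝔸_D*⁻¹𝔸_D𝔸_D*. Suppose v₁, …, v_D ∈ ℂ^{Fin r} and the index set {1,…,D} is partitioned into three sets S₀, S₁, S₂ such that: v_k = δ₀ (the vector with a one in coordinate 0 and zeros elsewhere) for k ∈ S₀; v_k = 𝟙 (the all-ones vector on Fin r) for k ∈ S₁; and v_k(0) = 0 and Σ_{a ∈ Fin r} v_k(a) = 0 for k ∈ S₂. Let v ∈ ℂ^𝕏 be the tensor-product vector defined by v(y) = Π_{k=1}^{D} v_k(y_k). Then C v = (1−r)^{|S₀| − |S₁|}·v. -/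

import Mathlib

/-- The `D`-th distance matrix `𝔸_D` of the Hamming graph `H(D,r)`:
the `(u,v)`-entry is `1` if `u` and `v` differ in all `D` coordinates, `0` otherwise. -/
noncomputable def hammingAD (D r : ℕ) : Matrix (Fin D → Fin r) (Fin D → Fin r) ℂ :=
  Matrix.of fun u v => if ∀ k, u k ≠ v k then 1 else 0

/-- The Hamming weight of a vertex of `H(D,r)`: the number of nonzero coordinates. -/
def hammingWt {D r : ℕ} [NeZero r] (y : Fin D → Fin r) : ℕ :=
  (Finset.univ.filter fun k => y k ≠ 0).card

/-- The `D`-th dual distance matrix `𝔸_D*` of `H(D,r)` with respect to the base vertex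
`(0,…,0)`: the diagonal matrix with `(y,y)`-entry `(−1)^{w(y)} (r−1)^{D−w(y)}`. -/
noncomputable def hammingADstar (D r : ℕ) [NeZero r] :
    Matrix (Fin D → Fin r) (Fin D → Fin r) ℂ :=
  Matrix.diagonal fun y => (-1) ^ hammingWt y * ((r : ℂ) - 1) ^ (D - hammingWt y)

/-- The group commutator `C = 𝔸_D⁻¹ 𝔸_D*⁻¹ 𝔸_D 𝔸_D*`. -/
noncomputable def hammingC (D r : ℕ) [NeZero r] :
    Matrix (Fin D → Fin r) (Fin D → Fin r) ℂ :=
  (hammingAD D r)⁻¹ * (hammingADstar D r)⁻¹ * hammingAD D r * hammingADstar D r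

noncomputable def bfun (r : ℕ) [NeZero r] : Fin r → ℂ :=
  fun a => if a = 0 then (r : ℂ) - 1 else -1

lemma sum_ite_ne {r : ℕ} (c : Fin r) (g : Fin r → ℂ) :
    ∑ a, (if c ≠ a then (1:ℂ) else 0) * g a = (∑ a, g a) - g c := by
  have h : ∀ a, (if c ≠ a then (1:ℂ) else 0) * g a = g a - (if a = c then g a else 0) := by
    intro a
    by_cases h : a = c
    · subst h; simp
    · rw [if_pos (Ne.symm h), if_neg h]; simp
  simp_rw [h]
  rw [Finset.sum_sub_distrib, Finset.sum_ite_eq' Finset.univ c g]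
  simp

lemma bfun_mul {r : ℕ} [NeZero r] (a : Fin r) (x : ℂ) :
    bfun r a * x = (r : ℂ) * (if a = 0 then x else 0) - x := by
  unfold bfun
  by_cases h : a = 0 <;> simp [h] <;> ring

lemma sum_bfun_mul {r : ℕ} [NeZero r] (w : Fin r → ℂ) :
    ∑ a, bfun r a * w a = (r : ℂ) * w 0 - ∑ a, w a := by
  simp_rw [bfun_mul]
  rw [Finset.sum_sub_distrib, ← Finset.mul_sum, Finset.sum_ite_eq' Finset.univ 0 w]
  simp

lemma AD_apply {D r : ℕ} (u y : Fin D → Fin r) :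
    hammingAD D r u y = ∏ k, if u k ≠ y k then (1:ℂ) else 0 := by
  show (if ∀ k, u k ≠ y k then (1:ℂ) else 0) = _
  by_cases h : ∀ k, u k ≠ y k
  · rw [if_pos h, Finset.prod_eq_one]
    intro k _; rw [if_pos (h k)]
  · rw [if_neg h]
    push_neg at h
    obtain ⟨k, hk⟩ := h
    exact (Finset.prod_eq_zero (Finset.mem_univ k) (by rw [if_neg (by simpa using hk)])).symm

lemma ADstar_eq {D r : ℕ} [NeZero r] :
    hammingADstar D r = Matrix.diagonal fun y => ∏ k, bfun r (y k) := by
  have hf : (fun y : Fin D → Fin r => (-1:ℂ) ^ hammingWt y * ((r:ℂ)-1) ^ (D - hammingWt y))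
      = fun y => ∏ k, bfun r (y k) := by
    funext y
    unfold bfun
    rw [Finset.prod_ite]
    simp only [Finset.prod_const]
    have hadd := Finset.card_filter_add_card_filter_not
      (s := (Finset.univ : Finset (Fin D))) (fun k => y k = 0)
    have hne : (Finset.univ.filter fun k => ¬ y k = 0).card = hammingWt y := rfl
    have hcard : (Finset.univ.filter fun k => y k = 0).card = D - hammingWt y := by
      simp only [Finset.card_univ, Fintype.card_fin] at hadd
      omega
    rw [hcard, hne, mul_comm]
  rw [hammingADstar, hf]

noncomputable def hammingADinv (D r : ℕ) : Matrix (Fin D → Fin r) (Fin D → Fin r) ℂ :=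
  Matrix.of fun u w => ∏ k, (if u k ≠ w k then ((r:ℂ)-1)⁻¹ else ((r:ℂ)-1)⁻¹ - 1)

lemma sub_one_ne {r : ℕ} (hr : 3 ≤ r) : ((r:ℂ) - 1) ≠ 0 := by
  have : (r:ℂ) ≠ 1 := by exact_mod_cast (by omega : r ≠ 1)
  exact sub_ne_zero.mpr this

lemma one_sub_ne {r : ℕ} (hr : 3 ≤ r) : (1 - (r:ℂ)) ≠ 0 := by
  have : (1:ℂ) ≠ r := by exact_mod_cast (by omega : 1 ≠ r)
  exact sub_ne_zero.mpr this

lemma AD_mul_inv {D r : ℕ} (hr : 3 ≤ r) : hammingAD D r * hammingADinv D r = 1 := by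
  have hs := sub_one_ne hr
  ext u w
  rw [Matrix.mul_apply, Matrix.one_apply]
  calc ∑ y, hammingAD D r u y * hammingADinv D r y w
      = ∑ y : Fin D → Fin r, ∏ k, ((if u k ≠ y k then (1:ℂ) else 0)
          * (if y k ≠ w k then ((r:ℂ)-1)⁻¹ else ((r:ℂ)-1)⁻¹ - 1)) := by
        refine Finset.sum_congr rfl fun y _ => ?_
        rw [AD_apply, show hammingADinv D r y w
          = ∏ k, (if y k ≠ w k then ((r:ℂ)-1)⁻¹ else ((r:ℂ)-1)⁻¹ - 1) from rfl,
          ← Finset.prod_mul_distrib]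
    _ = ∏ k, ∑ a, (if u k ≠ a then (1:ℂ) else 0)
          * (if a ≠ w k then ((r:ℂ)-1)⁻¹ else ((r:ℂ)-1)⁻¹ - 1) := by
        rw [Finset.prod_univ_sum, Fintype.piFinset_univ]
    _ = ∏ k, (if u k = w k then (1:ℂ) else 0) := by
        refine Finset.prod_congr rfl fun k _ => ?_
        rw [sum_ite_ne]
        have hsum : ∑ a : Fin r, (if a ≠ w k then ((r:ℂ)-1)⁻¹ else ((r:ℂ)-1)⁻¹ - 1)
            = ((r:ℂ)-1)⁻¹ := by
          have h : ∀ a : Fin r, (if a ≠ w k then ((r:ℂ)-1)⁻¹ else ((r:ℂ)-1)⁻¹ - 1)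
              = ((r:ℂ)-1)⁻¹ - (if a = w k then 1 else 0) := by
            intro a; by_cases h : a = w k <;> simp [h]
          simp_rw [h]
          rw [Finset.sum_sub_distrib, Finset.sum_const,
            Finset.sum_ite_eq' Finset.univ (w k) (fun _ => (1:ℂ))]
          simp only [Finset.card_univ, Fintype.card_fin, Finset.mem_univ, if_true,
            nsmul_eq_mul]
          field_simp
          ring
        rw [hsum]
        by_cases h : u k = w k
        · rw [if_pos h, if_neg (not_not_intro h)]
          ring
        · rw [if_neg h, if_pos h, sub_self]
    _ = if u = w then 1 else 0 := by
        by_cases h : u = w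
        · rw [if_pos h]
          exact Finset.prod_eq_one fun k _ => if_pos (by rw [h])
        · rw [if_neg h]
          have : ∃ k, u k ≠ w k := by
            by_contra hc; push_neg at hc; exact h (funext hc)
          obtain ⟨k, hk⟩ := this
          exact Finset.prod_eq_zero (Finset.mem_univ k) (if_neg hk)

lemma ADstar_det_isUnit {D r : ℕ} [NeZero r] (hr : 3 ≤ r) :
    IsUnit (hammingADstar D r).det := by
  rw [ADstar_eq, Matrix.det_diagonal, isUnit_iff_ne_zero]
  refine Finset.prod_ne_zero_iff.mpr fun y _ => Finset.prod_ne_zero_iff.mpr fun k _ => ?_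
  unfold bfun
  split
  · exact sub_one_ne hr
  · norm_num

lemma key_comm {D r : ℕ} [NeZero r] (hr : 3 ≤ r)
    (vk : Fin D → Fin r → ℂ) (S₀ S₁ S₂ : Finset (Fin D))
    (hunion : S₀ ∪ S₁ ∪ S₂ = Finset.univ)
    (h01 : Disjoint S₀ S₁) (h02 : Disjoint S₀ S₂) (h12 : Disjoint S₁ S₂)
    (h0 : ∀ k ∈ S₀, vk k = fun a => if a = 0 then 1 else 0)
    (h1 : ∀ k ∈ S₁, vk k = fun _ => 1)
    (h2 : ∀ k ∈ S₂, vk k 0 = 0 ∧ ∑ a, vk k a = 0) :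
    (hammingAD D r * hammingADstar D r).mulVec (fun y => ∏ k, vk k (y k))
      = ((1 - (r:ℂ)) ^ ((S₀.card:ℤ) - (S₁.card:ℤ)))
        • (hammingADstar D r * hammingAD D r).mulVec (fun y => ∏ k, vk k (y k)) := by
  have hne := one_sub_ne hr
  funext u
  rw [← Matrix.mulVec_mulVec, ← Matrix.mulVec_mulVec, ADstar_eq]
  simp only [Pi.smul_apply, smul_eq_mul]
  have hLHS : (hammingAD D r).mulVec
      ((Matrix.diagonal fun y => ∏ k, bfun r (y k)).mulVec (fun y => ∏ k, vk k (y k))) u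
      = ∏ k, ∑ a, (if u k ≠ a then (1:ℂ) else 0) * (bfun r a * vk k a) := by
    have hdiag : (Matrix.diagonal fun y : Fin D → Fin r => ∏ k, bfun r (y k)).mulVec
        (fun y => ∏ k, vk k (y k))
        = fun y => (∏ k, bfun r (y k)) * ∏ k, vk k (y k) :=
      funext fun y => Matrix.mulVec_diagonal _ _ y
    rw [hdiag, Finset.prod_univ_sum, Fintype.piFinset_univ]
    simp only [Matrix.mulVec, dotProduct]
    refine Finset.sum_congr rfl fun y _ => ?_
    rw [show hammingAD D r u y = ∏ k, if u k ≠ y k then (1:ℂ) else 0 from AD_apply u y,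
      ← Finset.prod_mul_distrib, ← Finset.prod_mul_distrib]
  have hRHS : (Matrix.diagonal fun y => ∏ k, bfun r (y k)).mulVec
      ((hammingAD D r).mulVec (fun y => ∏ k, vk k (y k))) u
      = ∏ k, (bfun r (u k) * ∑ a, (if u k ≠ a then (1:ℂ) else 0) * vk k a) := by
    rw [Matrix.mulVec_diagonal, Finset.prod_mul_distrib]
    congr 1
    simp only [Matrix.mulVec, dotProduct]
    rw [Finset.prod_univ_sum, Fintype.piFinset_univ]
    refine Finset.sum_congr rfl fun y _ => ?_
    rw [show hammingAD D r u y = ∏ k, if u k ≠ y k then (1:ℂ) else 0 from AD_apply u y,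
      ← Finset.prod_mul_distrib]
  rw [hLHS, hRHS]
  have hpoint : ∀ k : Fin D,
      (∑ a, (if u k ≠ a then (1:ℂ) else 0) * (bfun r a * vk k a))
        = (if k ∈ S₀ then (1 - (r:ℂ)) else if k ∈ S₁ then (1 - (r:ℂ))⁻¹ else 1)
          * (bfun r (u k) * ∑ a, (if u k ≠ a then (1:ℂ) else 0) * vk k a) := by
    intro k
    rw [sum_ite_ne, sum_ite_ne, sum_bfun_mul]
    by_cases hk0 : k ∈ S₀
    · rw [if_pos hk0, h0 k hk0]
      simp only [Finset.sum_ite_eq' Finset.univ (0 : Fin r) (fun _ => (1:ℂ)),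
        Finset.mem_univ, if_true]
      by_cases hu : u k = 0 <;> simp [bfun, hu] <;> ring
    · rw [if_neg hk0]
      by_cases hk1 : k ∈ S₁
      · rw [if_pos hk1, h1 k hk1]
        simp only [Finset.sum_const, Finset.card_univ, Fintype.card_fin, nsmul_eq_mul,
          mul_one]
        have hb : bfun r (u k) ≠ 0 := by
          unfold bfun; split
          · exact sub_one_ne hr
          · norm_num
        field_simp
        ring
      · rw [if_neg hk1]
        have hk2 : k ∈ S₂ := by
          have hu : k ∈ S₀ ∪ S₁ ∪ S₂ := hunion ▸ Finset.mem_univ k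
          simp only [Finset.mem_union, hk0, hk1, false_or] at hu
          exact hu
        obtain ⟨ha, hb⟩ := h2 k hk2
        rw [ha, hb]
        ring
  rw [Finset.prod_congr rfl fun k _ => hpoint k, Finset.prod_mul_distrib]
  congr 1
  rw [show (Finset.univ : Finset (Fin D)) = S₀ ∪ S₁ ∪ S₂ from hunion.symm,
    Finset.prod_union (Finset.disjoint_union_left.mpr ⟨h02, h12⟩),
    Finset.prod_union h01]
  have p0 : (∏ k ∈ S₀, if k ∈ S₀ then (1 - (r:ℂ)) else if k ∈ S₁ then (1 - (r:ℂ))⁻¹ else 1)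
      = (1 - (r:ℂ)) ^ S₀.card := by
    rw [Finset.prod_congr rfl fun k hk => if_pos hk, Finset.prod_const]
  have p1 : (∏ k ∈ S₁, if k ∈ S₀ then (1 - (r:ℂ)) else if k ∈ S₁ then (1 - (r:ℂ))⁻¹ else 1)
      = ((1 - (r:ℂ))⁻¹) ^ S₁.card := by
    rw [Finset.prod_congr rfl fun k hk => by
      rw [if_neg (Finset.disjoint_right.mp h01 hk), if_pos hk], Finset.prod_const]
  have p2 : (∏ k ∈ S₂, if k ∈ S₀ then (1 - (r:ℂ)) else if k ∈ S₁ then (1 - (r:ℂ))⁻¹ else 1)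
      = 1 := by
    refine Finset.prod_eq_one fun k hk => ?_
    rw [if_neg (Finset.disjoint_right.mp h02 hk), if_neg (Finset.disjoint_right.mp h12 hk)]
  rw [p0, p1, p2, mul_one, zpow_sub₀ hne, div_eq_mul_inv, zpow_natCast, zpow_natCast,
    inv_pow]

theorem stmt18 (D r : ℕ) (hD : 1 ≤ D) (hr : 3 ≤ r)
    (vk : Fin D → Fin r → ℂ) (S₀ S₁ S₂ : Finset (Fin D))
    (hunion : S₀ ∪ S₁ ∪ S₂ = Finset.univ)
    (h01 : Disjoint S₀ S₁) (h02 : Disjoint S₀ S₂) (h12 : Disjoint S₁ S₂)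
    -- on `S₀` the factor is `δ₀`:
    (h0 : ∀ k ∈ S₀, vk k = fun a => if a = (⟨0, by omega⟩ : Fin r) then 1 else 0)
    -- on `S₁` the factor is the all-ones vector `𝟙`:
    (h1 : ∀ k ∈ S₁, vk k = fun _ => 1)
    -- on `S₂` the factor vanishes at `0` and has coordinate sum `0`:
    (h2 : ∀ k ∈ S₂, vk k (⟨0, by omega⟩ : Fin r) = 0 ∧ ∑ a : Fin r, vk k a = 0)
    (v : (Fin D → Fin r) → ℂ)
    (hv : v = fun y => ∏ k : Fin D, vk k (y k)) :
    (@hammingC D r ⟨by omega⟩).mulVec v =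
      ((1 - (r : ℂ)) ^ ((S₀.card : ℤ) - (S₁.card : ℤ))) • v := by
  have : NeZero r := ⟨by omega⟩
  have hzero : (⟨0, by omega⟩ : Fin r) = 0 := by
    ext
    simp
  rw [hzero] at h0 h2
  subst hv
  have hdetA : IsUnit (hammingAD D r).det :=
    Matrix.isUnit_det_of_right_inverse (AD_mul_inv hr)
  have hdetB : IsUnit (hammingADstar D r).det := ADstar_det_isUnit hr
  have key := key_comm hr vk S₀ S₁ S₂ hunion h01 h02 h12 h0 h1 h2
  show ((hammingAD D r)⁻¹ * (hammingADstar D r)⁻¹ * hammingAD D r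
      * hammingADstar D r).mulVec _ = _
  rw [mul_assoc, mul_assoc, ← Matrix.mulVec_mulVec, ← Matrix.mulVec_mulVec, key,
    Matrix.mulVec_smul, Matrix.mulVec_smul, Matrix.mulVec_mulVec, Matrix.mulVec_mulVec,
    mul_assoc (hammingAD D r)⁻¹ (hammingADstar D r)⁻¹,
    ← mul_assoc (hammingADstar D r)⁻¹ (hammingADstar D r),
    Matrix.nonsing_inv_mul _ hdetB, one_mul,
    Matrix.nonsing_inv_mul _ hdetA, Matrix.one_mulVec]
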